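/- Suppose 𝒦(Σ) ∩ 𝒴 = {0}. Then the constrained system (Σ,𝒴) is reachable if and only if X(F) = 𝒱*(Σ) = ℛ*(Σ), where 𝒱*(Σ) is the weakly unobservable subspace and ℛ*(Σ) = 𝒱*(Σ) ∩ 𝒯*(Σ). -/
import Mathlib


open Pointwise

/-- `ℓ`-fold iterate of a set-valued map: `SIter F ℓ x = F^ℓ(x)`. -/
def SIter {E : Type*} (F : E → Set E) : ℕ → E → Set E
  | 0, x => {x}
  | n + 1, x => ⋃ y ∈ SIter F n x, F y

/-- `X(F)`: initial states of infinite solutions of `x_{k+1} ∈ F(x_k)`. -/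
def XSet {E : Type*} (F : E → Set E) : Set E :=
  {x | ∃ f : ℕ → E, f 0 = x ∧ ∀ k, f (k + 1) ∈ F (f k)}

/-- `R(F) = ⋃_{ℓ ≥ 1} F^ℓ(0)`. -/
def RSet {E : Type*} [Zero E] (F : E → Set E) : Set E :=
  ⋃ ℓ ∈ {ℓ : ℕ | 1 ≤ ℓ}, SIter F ℓ 0

/-- The set-valued map `F(x) = Ax + B D^{-1}(𝒴 − Cx)` of the constrained system `(Σ,𝒴)`. -/
def Fmap {n m s : ℕ} (A : Matrix (Fin n) (Fin n) ℝ) (B : Matrix (Fin n) (Fin m) ℝ)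
    (C : Matrix (Fin s) (Fin n) ℝ) (D : Matrix (Fin s) (Fin m) ℝ)
    (Y : Set (Fin s → ℝ)) : (Fin n → ℝ) → Set (Fin n → ℝ) :=
  fun x => {z | ∃ u : Fin m → ℝ, C.mulVec x + D.mulVec u ∈ Y ∧ z = A.mulVec x + B.mulVec u}

/-- The strongly reachable subspace `𝒯*(Σ)`: states reachable from `0` with the output
kept identically zero along the way. -/
def Tstar {n m s : ℕ} (A : Matrix (Fin n) (Fin n) ℝ) (B : Matrix (Fin n) (Fin m) ℝ)
    (C : Matrix (Fin s) (Fin n) ℝ) (D : Matrix (Fin s) (Fin m) ℝ) : Set (Fin n → ℝ) :=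
  RSet (Fmap A B C D ({0} : Set (Fin s → ℝ)))

/-- The weakly unobservable subspace `𝒱*(Σ)`: initial states for which an input exists
making the output identically zero. -/
def Vstar {n m s : ℕ} (A : Matrix (Fin n) (Fin n) ℝ) (B : Matrix (Fin n) (Fin m) ℝ)
    (C : Matrix (Fin s) (Fin n) ℝ) (D : Matrix (Fin s) (Fin m) ℝ) : Set (Fin n → ℝ) :=
  XSet (Fmap A B C D ({0} : Set (Fin s → ℝ)))

/-- `𝒦(Σ) = im D + C 𝒯*(Σ)`. -/
def Kset {n m s : ℕ} (A : Matrix (Fin n) (Fin n) ℝ) (B : Matrix (Fin n) (Fin m) ℝ)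
    (C : Matrix (Fin s) (Fin n) ℝ) (D : Matrix (Fin s) (Fin m) ℝ) : Set (Fin s → ℝ) :=
  {y | ∃ (u : Fin m → ℝ) (t : Fin n → ℝ), t ∈ Tstar A B C D ∧ y = D.mulVec u + C.mulVec t}

/-- The image `im [C D]`. -/
def CDrange {n m s : ℕ} (C : Matrix (Fin s) (Fin n) ℝ) (D : Matrix (Fin s) (Fin m) ℝ) :
    Set (Fin s → ℝ) :=
  Set.range (fun p : (Fin n → ℝ) × (Fin m → ℝ) => C.mulVec p.1 + D.mulVec p.2)

section Aux

lemma siter_mono {E : Type*} {F G : E → Set E} (h : ∀ x, F x ⊆ G x) :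
    ∀ ℓ x, SIter F ℓ x ⊆ SIter G ℓ x := by
  intro ℓ
  induction ℓ with
  | zero => intro x; simp [SIter]
  | succ k ih =>
    intro x z hz
    simp only [SIter, Set.mem_iUnion, exists_prop] at hz ⊢
    obtain ⟨y, hy, hzy⟩ := hz
    exact ⟨y, ih x hy, h y hzy⟩

lemma rset_mono {E : Type*} [Zero E] {F G : E → Set E} (h : ∀ x, F x ⊆ G x) :
    RSet F ⊆ RSet G := by
  intro z hz
  simp only [RSet, Set.mem_iUnion, exists_prop] at hz ⊢
  obtain ⟨ℓ, hℓ, hzℓ⟩ := hz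
  exact ⟨ℓ, hℓ, siter_mono h ℓ 0 hzℓ⟩

lemma xset_mono {E : Type*} {F G : E → Set E} (h : ∀ x, F x ⊆ G x) :
    XSet F ⊆ XSet G := by
  rintro x ⟨f, hf0, hf⟩
  exact ⟨f, hf0, fun k => h _ (hf k)⟩

variable {n m s : ℕ} (A : Matrix (Fin n) (Fin n) ℝ) (B : Matrix (Fin n) (Fin m) ℝ)
    (C : Matrix (Fin s) (Fin n) ℝ) (D : Matrix (Fin s) (Fin m) ℝ)

lemma fmap0_sub_fmap {Y : Set (Fin s → ℝ)} (h0Y : (0 : Fin s → ℝ) ∈ Y) (x : Fin n → ℝ) :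
    Fmap A B C D ({0} : Set (Fin s → ℝ)) x ⊆ Fmap A B C D Y x := by
  rintro z ⟨u, hu, hz⟩
  refine ⟨u, ?_, hz⟩
  rw [Set.mem_singleton_iff] at hu
  rw [hu]; exact h0Y

lemma zero_mem_tstar : (0 : Fin n → ℝ) ∈ Tstar A B C D := by
  simp only [Tstar, RSet, Set.mem_iUnion, exists_prop]
  refine ⟨1, Set.mem_setOf.mpr (le_refl 1), ?_⟩
  simp only [SIter, Set.mem_iUnion, exists_prop]
  refine ⟨0, rfl, ⟨0, ?_, ?_⟩⟩ <;> simp [Matrix.mulVec_zero]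

lemma tstar_step {x z : Fin n → ℝ} (hx : x ∈ Tstar A B C D)
    (hz : z ∈ Fmap A B C D ({0} : Set (Fin s → ℝ)) x) : z ∈ Tstar A B C D := by
  simp only [Tstar, RSet, Set.mem_iUnion, exists_prop] at hx ⊢
  obtain ⟨ℓ, hℓ, hxℓ⟩ := hx
  refine ⟨ℓ + 1, le_trans hℓ (Nat.le_succ ℓ), ?_⟩
  simp only [SIter, Set.mem_iUnion, exists_prop]
  exact ⟨x, hxℓ, hz⟩

lemma fmap_eq_on_tstar {Y : Set (Fin s → ℝ)} (h0Y : (0 : Fin s → ℝ) ∈ Y)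
    (hK : Kset A B C D ∩ Y = {0}) {x : Fin n → ℝ} (hx : x ∈ Tstar A B C D) :
    Fmap A B C D Y x = Fmap A B C D ({0} : Set (Fin s → ℝ)) x := by
  apply Set.Subset.antisymm
  · rintro z ⟨u, hu, hz⟩
    refine ⟨u, ?_, hz⟩
    have hmem : C.mulVec x + D.mulVec u ∈ Kset A B C D ∩ Y :=
      ⟨⟨u, x, hx, (add_comm _ _)⟩, hu⟩
    rw [hK] at hmem
    exact hmem
  · exact fmap0_sub_fmap A B C D h0Y x

lemma rsetY_sub_tstar {Y : Set (Fin s → ℝ)} (h0Y : (0 : Fin s → ℝ) ∈ Y)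
    (hK : Kset A B C D ∩ Y = {0}) :
    RSet (Fmap A B C D Y) ⊆ Tstar A B C D := by
  have hS : ∀ ℓ, SIter (Fmap A B C D Y) ℓ 0 ⊆ Tstar A B C D := by
    intro ℓ
    induction ℓ with
    | zero =>
      intro z hz
      simp only [SIter, Set.mem_singleton_iff] at hz
      rw [hz]; exact zero_mem_tstar A B C D
    | succ k ih =>
      intro z hz
      simp only [SIter, Set.mem_iUnion, exists_prop] at hz
      obtain ⟨y, hy, hzy⟩ := hz
      have hyT := ih hy
      rw [fmap_eq_on_tstar A B C D h0Y hK hyT] at hzy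
      exact tstar_step A B C D hyT hzy
  intro z hz
  simp only [RSet, Set.mem_iUnion, exists_prop] at hz
  obtain ⟨ℓ, _, hzℓ⟩ := hz
  exact hS ℓ hzℓ

end Aux

/-- If `𝒦(Σ) ∩ 𝒴 = {0}`, then `(Σ,𝒴)` is reachable iff `X(F) = 𝒱*(Σ) = ℛ*(Σ)`,
where `ℛ*(Σ) = 𝒱*(Σ) ∩ 𝒯*(Σ)`. -/
theorem stmt11 {n m s : ℕ} (A : Matrix (Fin n) (Fin n) ℝ) (B : Matrix (Fin n) (Fin m) ℝ)
    (C : Matrix (Fin s) (Fin n) ℝ) (D : Matrix (Fin s) (Fin m) ℝ)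
    (Y : Set (Fin s → ℝ)) (hY : Convex ℝ Y) (h0Y : (0 : Fin s → ℝ) ∈ Y)
    (hsolid : (interior (Y ∩ CDrange C D)).Nonempty)
    (hK : Kset A B C D ∩ Y = {0}) :
    XSet (Fmap A B C D Y) ⊆ RSet (Fmap A B C D Y) ↔
      (XSet (Fmap A B C D Y) = Vstar A B C D ∧
        Vstar A B C D = Vstar A B C D ∩ Tstar A B C D) := by
  constructor
  · intro hreach
    have hXT : XSet (Fmap A B C D Y) ⊆ Tstar A B C D :=
      fun x hx => rsetY_sub_tstar A B C D h0Y hK (hreach hx)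
    have hVX : Vstar A B C D ⊆ XSet (Fmap A B C D Y) :=
      xset_mono (fmap0_sub_fmap A B C D h0Y)
    have hXV : XSet (Fmap A B C D Y) ⊆ Vstar A B C D := by
      rintro x ⟨f, hf0, hf⟩
      have hT : ∀ k, f k ∈ Tstar A B C D := by
        intro k
        induction k with
        | zero => rw [hf0]; exact hXT ⟨f, hf0, hf⟩
        | succ k ih =>
          have h1 := hf k
          rw [fmap_eq_on_tstar A B C D h0Y hK ih] at h1
          exact tstar_step A B C D ih h1
      refine ⟨f, hf0, fun k => ?_⟩
      have h1 := hf k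
      rwa [fmap_eq_on_tstar A B C D h0Y hK (hT k)] at h1
    refine ⟨Set.Subset.antisymm hXV hVX, ?_⟩
    apply Set.Subset.antisymm
    · exact fun v hv => ⟨hv, hXT (hVX hv)⟩
    · exact Set.inter_subset_left
  · rintro ⟨h1, h2⟩ x hx
    have hxV : x ∈ Vstar A B C D := h1 ▸ hx
    have hxT : x ∈ Tstar A B C D := (h2 ▸ hxV).2
    exact rset_mono (fmap0_sub_fmap A B C D h0Y) hxT
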